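/- For positive semidefinite matrices A and B, and every scalar λ > 0, (λ A²)(A + λ1)^{-1} + (λ B²)(B + λ1)^{-1} ≥ ((A+B)/2)^{1/2} ( λA(A+λ1)^{-1} + λB(B+λ1)^{-1} ) ((A+B)/2)^{1/2} in the Loewner order. -/

import Mathlib

open scoped ComplexOrder Matrix


/-- `eigDesc M j` : the `j`-th largest (0-indexed) real part of the eigenvalues
(roots of the characteristic polynomial, with multiplicity) of `M`. -/
noncomputable def eigDesc {m : Type*} [Fintype m] [DecidableEq m]
    (M : Matrix m m ℂ) (j : ℕ) : ℝ :=
  ((M.charpoly.roots.map Complex.re).sort (· ≥ ·)).getD j 0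

/-- `svalDesc K j` : the `j`-th largest (0-indexed) singular value of `K`. -/
noncomputable def svalDesc {m n : Type*} [Fintype m] [Fintype n] [DecidableEq n]
    (K : Matrix m n ℂ) (j : ℕ) : ℝ :=
  Real.sqrt (eigDesc (Kᴴ * K) j)

/-- Real power of a Hermitian matrix, via the functional calculus. -/
noncomputable def Matrix.IsHermitian.rpow {n : Type*} [Fintype n] [DecidableEq n]
    {A : Matrix n n ℂ} (hA : A.IsHermitian) (r : ℝ) : Matrix n n ℂ :=
  hA.cfc (fun x => x ^ r)
noncomputable def Matrix.PosSemidef.sqrt {n 𝕜 : Type*} [Fintype n] [DecidableEq n] [RCLike 𝕜]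
    {A : Matrix n n 𝕜} (hA : A.PosSemidef) : Matrix n n 𝕜 :=
  hA.1.eigenvectorUnitary.1 * Matrix.diagonal ((↑) ∘ (√·) ∘ hA.1.eigenvalues) *
  (star hA.1.eigenvectorUnitary : Matrix n n 𝕜)

lemma psd_sqrt_mul_self' {n : ℕ} {A : Matrix (Fin n) (Fin n) ℂ} (hA : A.PosSemidef) :
    hA.sqrt * hA.sqrt = A := by
  have hU : (star hA.1.eigenvectorUnitary : Matrix (Fin n) (Fin n) ℂ) * hA.1.eigenvectorUnitary.1 = 1 :=
    Unitary.star_mul_self_of_mem hA.1.eigenvectorUnitary.2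
  have hD : Matrix.diagonal (RCLike.ofReal ∘ (√·) ∘ hA.1.eigenvalues : Fin n → ℂ) *
      Matrix.diagonal (RCLike.ofReal ∘ (√·) ∘ hA.1.eigenvalues : Fin n → ℂ)
      = Matrix.diagonal (RCLike.ofReal ∘ hA.1.eigenvalues) := by
    rw [Matrix.diagonal_mul_diagonal]
    congr 1; funext i
    simp only [Function.comp_apply]
    rw [← RCLike.ofReal_mul, Real.mul_self_sqrt (hA.eigenvalues_nonneg i)]
  conv_rhs => rw [hA.1.spectral_theorem]
  rw [Unitary.conjStarAlgAut_apply]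
  unfold Matrix.PosSemidef.sqrt
  calc _ = hA.1.eigenvectorUnitary.1 * Matrix.diagonal (RCLike.ofReal ∘ (√·) ∘ hA.1.eigenvalues : Fin n → ℂ)
      * ((star hA.1.eigenvectorUnitary : Matrix (Fin n) (Fin n) ℂ) * hA.1.eigenvectorUnitary.1)
      * Matrix.diagonal (RCLike.ofReal ∘ (√·) ∘ hA.1.eigenvalues : Fin n → ℂ)
      * (star hA.1.eigenvectorUnitary : Matrix (Fin n) (Fin n) ℂ) := by
        simp only [Matrix.mul_assoc]
    _ = _ := by
        rw [hU, Matrix.mul_one]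
        simp only [Matrix.mul_assoc]
        rw [← Matrix.mul_assoc (Matrix.diagonal _) (Matrix.diagonal _), hD]

lemma psd_sqrt_herm' {n : ℕ} {A : Matrix (Fin n) (Fin n) ℂ} (hA : A.PosSemidef) :
    hA.sqrtᴴ = hA.sqrt := by
  have hs : star (RCLike.ofReal ∘ (√·) ∘ hA.1.eigenvalues : Fin n → ℂ)
      = RCLike.ofReal ∘ (√·) ∘ hA.1.eigenvalues := by
    funext i; simp
  unfold Matrix.PosSemidef.sqrt
  rw [Matrix.conjTranspose_mul, Matrix.conjTranspose_mul, Matrix.diagonal_conjTranspose, hs]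
  simp [Matrix.mul_assoc, Matrix.star_eq_conjTranspose]



section Aux

variable {n : ℕ}

lemma smul_posSemidef' {P : Matrix (Fin n) (Fin n) ℂ} (hP : P.PosSemidef)
    {c : ℝ} (hc : 0 ≤ c) : ((c : ℂ) • P).PosSemidef := by
  refine Matrix.PosSemidef.of_dotProduct_mulVec_nonneg ?_ ?_
  · unfold Matrix.IsHermitian
    rw [Matrix.conjTranspose_smul, hP.isHermitian.eq]
    simp
  · intro x
    rw [Matrix.smul_mulVec, dotProduct_smul, smul_eq_mul]
    exact mul_nonneg (by exact_mod_cast hc) (hP.dotProduct_mulVec_nonneg x)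

lemma commute_inv' {C N : Matrix (Fin n) (Fin n) ℂ} (hdet : IsUnit N.det)
    (h : C * N = N * C) : C * N⁻¹ = N⁻¹ * C :=
  calc C * N⁻¹ = (N⁻¹ * N) * (C * N⁻¹) := by
        rw [Matrix.nonsing_inv_mul N hdet, one_mul]
    _ = N⁻¹ * ((N * C) * N⁻¹) := by simp only [Matrix.mul_assoc]
    _ = N⁻¹ * ((C * N) * N⁻¹) := by rw [h]
    _ = (N⁻¹ * C) * (N * N⁻¹) := by simp only [Matrix.mul_assoc]
    _ = N⁻¹ * C := by rw [Matrix.mul_nonsing_inv N hdet, mul_one]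

lemma right_inv_lemma₁ (X Y Xi Yi Si : Matrix (Fin n) (Fin n) ℂ)
    (hXXi : X * Xi = 1) (hYYi : Y * Yi = 1) (hYiY : Yi * Y = 1)
    (hSi : (Xi + Yi) * Si = 1) :
    (X + Y) * (Yi * Si * Xi) = 1 := by
  have hid : X * (Xi + Yi) * Y = X + Y := by
    calc X * (Xi + Yi) * Y = (X * Xi) * Y + X * (Yi * Y) := by noncomm_ring
      _ = X + Y := by rw [hXXi, hYiY, one_mul, mul_one, add_comm]
  calc (X + Y) * (Yi * Si * Xi) = (X * (Xi + Yi) * Y) * (Yi * Si * Xi) := by rw [hid]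
    _ = (X * (Xi + Yi)) * ((Y * Yi) * (Si * Xi)) := by simp only [Matrix.mul_assoc]
    _ = (X * (Xi + Yi)) * (Si * Xi) := by rw [hYYi, one_mul]
    _ = X * (((Xi + Yi) * Si) * Xi) := by simp only [Matrix.mul_assoc]
    _ = X * Xi := by rw [hSi, one_mul]
    _ = 1 := hXXi

lemma right_inv_lemma₂ (X Y Xi Yi Si : Matrix (Fin n) (Fin n) ℂ)
    (hXXi : X * Xi = 1) (hXiX : Xi * X = 1) (hYYi : Y * Yi = 1)
    (hSi : (Xi + Yi) * Si = 1) :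
    (X + Y) * (Xi * Si * Yi) = 1 := by
  have hid : Y * (Xi + Yi) * X = X + Y := by
    calc Y * (Xi + Yi) * X = Y * (Xi * X) + (Y * Yi) * X := by noncomm_ring
      _ = X + Y := by rw [hXiX, hYYi, one_mul, mul_one, add_comm]
  calc (X + Y) * (Xi * Si * Yi) = (Y * (Xi + Yi) * X) * (Xi * Si * Yi) := by rw [hid]
    _ = (Y * (Xi + Yi)) * ((X * Xi) * (Si * Yi)) := by simp only [Matrix.mul_assoc]
    _ = (Y * (Xi + Yi)) * (Si * Yi) := by rw [hXXi, one_mul]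
    _ = Y * (((Xi + Yi) * Si) * Yi) := by simp only [Matrix.mul_assoc]
    _ = Y * Yi := by rw [hSi, one_mul]
    _ = 1 := hYYi

/-- AM-HM gap identity: `Xi + Yi - 4 Zi = (Xi - Yi) Si (Xi - Yi)`. -/
lemma amhm_alg (Xi Yi Si Zi : Matrix (Fin n) (Fin n) ℂ)
    (hS : (Xi + Yi) * Si * (Xi + Yi) = Xi + Yi)
    (hZ1 : Yi * Si * Xi = Zi) (hZ2 : Xi * Si * Yi = Zi) :
    Xi + Yi - (4:ℂ) • Zi = (Xi - Yi) * Si * (Xi - Yi) := by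
  have h4 : (4:ℂ) • Zi = (2:ℂ) • (Yi * Si * Xi) + (2:ℂ) • (Xi * Si * Yi) := by
    rw [hZ1, hZ2]; module
  rw [h4, ← hS]
  noncomm_ring
  module

/-- Main algebraic reduction. -/
lemma alg_main (A B X Y Xi Yi Zi Q M : Matrix (Fin n) (Fin n) ℂ) (lc : ℂ)
    (hX : X = A + lc • 1) (hY : Y = B + lc • 1)
    (hXXi : X * Xi = 1) (hYYi : Y * Yi = 1)
    (hZi' : Zi * (X + Y) = 1)
    (hQZi : Q * Zi = Zi * Q)
    (hQQ : Q * Q = M) (hMM : (2:ℂ) • M = A + B) :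
    lc • (A * A) * Xi + lc • (B * B) * Yi - Q * (lc • A * Xi + lc • B * Yi) * Q
      = lc ^ 3 • (Xi + Yi - (4:ℂ) • Zi) + lc ^ 2 • (Q * (Xi + Yi - (4:ℂ) • Zi) * Q) := by
  -- resolvent identities
  have i1 : lc • (A * A) * Xi = lc • A - lc ^ 2 • 1 + lc ^ 3 • Xi := by
    have e : lc • (A * A) = (lc • A - lc ^ 2 • (1 : Matrix (Fin n) (Fin n) ℂ)) * X
        + lc ^ 3 • 1 := by
      rw [hX]; noncomm_ring; module
    calc lc • (A * A) * Xi
        = ((lc • A - lc ^ 2 • 1) * X + lc ^ 3 • 1) * Xi := by rw [← e]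
      _ = (lc • A - lc ^ 2 • 1) * (X * Xi) + lc ^ 3 • Xi := by noncomm_ring
      _ = _ := by rw [hXXi]; noncomm_ring
  have i2 : lc • (B * B) * Yi = lc • B - lc ^ 2 • 1 + lc ^ 3 • Yi := by
    have e : lc • (B * B) = (lc • B - lc ^ 2 • (1 : Matrix (Fin n) (Fin n) ℂ)) * Y
        + lc ^ 3 • 1 := by
      rw [hY]; noncomm_ring; module
    calc lc • (B * B) * Yi
        = ((lc • B - lc ^ 2 • 1) * Y + lc ^ 3 • 1) * Yi := by rw [← e]
      _ = (lc • B - lc ^ 2 • 1) * (Y * Yi) + lc ^ 3 • Yi := by noncomm_ring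
      _ = _ := by rw [hYYi]; noncomm_ring
  have i3 : lc • A * Xi = lc • 1 - lc ^ 2 • Xi := by
    have e : lc • A = lc • X - lc ^ 2 • (1 : Matrix (Fin n) (Fin n) ℂ) := by
      rw [hX]; module
    calc lc • A * Xi = (lc • X - lc ^ 2 • 1) * Xi := by rw [← e]
      _ = lc • (X * Xi) - lc ^ 2 • Xi := by noncomm_ring
      _ = _ := by rw [hXXi]
  have i4 : lc • B * Yi = lc • 1 - lc ^ 2 • Yi := by
    have e : lc • B = lc • Y - lc ^ 2 • (1 : Matrix (Fin n) (Fin n) ℂ) := by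
      rw [hY]; module
    calc lc • B * Yi = (lc • Y - lc ^ 2 • 1) * Yi := by rw [← e]
      _ = lc • (Y * Yi) - lc ^ 2 • Yi := by noncomm_ring
      _ = _ := by rw [hYYi]
  -- middle term
  have hmidQ : Q * (lc • A * Xi + lc • B * Yi) * Q
      = lc • (A + B) - lc ^ 2 • (Q * (Xi + Yi) * Q) := by
    rw [i3, i4]
    calc Q * (lc • 1 - lc ^ 2 • Xi + (lc • 1 - lc ^ 2 • Yi)) * Q
        = (2 * lc) • (Q * Q) - lc ^ 2 • (Q * (Xi + Yi) * Q) := by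
          noncomm_ring
          match_scalars <;> (try simp only [nsmul_eq_mul, zsmul_eq_mul, smul_eq_mul]) <;> (try push_cast) <;> ring
      _ = _ := by rw [hQQ, ← hMM]; module
  -- constant identity
  have hconst : lc ^ 3 • ((4:ℂ) • Zi) + lc ^ 2 • (Q * ((4:ℂ) • Zi) * Q)
      = (2 * lc ^ 2) • 1 := by
    have hQZiQ : Q * ((4:ℂ) • Zi) * Q = (4:ℂ) • (Zi * M) := by
      calc Q * ((4:ℂ) • Zi) * Q = (4:ℂ) • (Q * Zi * Q) := by noncomm_ring
        _ = (4:ℂ) • (Zi * (Q * Q)) := by rw [hQZi, Matrix.mul_assoc]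
        _ = _ := by rw [hQQ]
    rw [hQZiQ]
    have hsum : (4 * lc) • (1 : Matrix (Fin n) (Fin n) ℂ) + (4:ℂ) • M
        = (2:ℂ) • (X + Y) := by
      have h4M : (4:ℂ) • M = (2:ℂ) • (A + B) := by rw [← hMM]; module
      rw [h4M, hX, hY]; module
    have key : Zi * ((4 * lc) • (1 : Matrix (Fin n) (Fin n) ℂ) + (4:ℂ) • M)
        = (2:ℂ) • 1 := by
      rw [hsum]
      calc Zi * ((2:ℂ) • (X + Y)) = (2:ℂ) • (Zi * (X + Y)) := by noncomm_ring
        _ = _ := by rw [hZi']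
    calc lc ^ 3 • ((4:ℂ) • Zi) + lc ^ 2 • ((4:ℂ) • (Zi * M))
        = lc ^ 2 • (Zi * ((4 * lc) • (1 : Matrix (Fin n) (Fin n) ℂ) + (4:ℂ) • M)) := by
          noncomm_ring
          match_scalars <;> (try simp only [nsmul_eq_mul, zsmul_eq_mul, smul_eq_mul]) <;> (try push_cast) <;> ring
      _ = lc ^ 2 • ((2:ℂ) • (1 : Matrix (Fin n) (Fin n) ℂ)) := by rw [key]
      _ = (2 * lc ^ 2) • 1 := by module
  -- combine
  calc lc • (A * A) * Xi + lc • (B * B) * Yi - Q * (lc • A * Xi + lc • B * Yi) * Q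
      = (lc • A - lc ^ 2 • 1 + lc ^ 3 • Xi) + (lc • B - lc ^ 2 • 1 + lc ^ 3 • Yi)
        - (lc • (A + B) - lc ^ 2 • (Q * (Xi + Yi) * Q)) := by rw [i1, i2, hmidQ]
    _ = lc ^ 3 • (Xi + Yi) + lc ^ 2 • (Q * (Xi + Yi) * Q) - (2 * lc ^ 2) • 1 := by module
    _ = lc ^ 3 • (Xi + Yi) + lc ^ 2 • (Q * (Xi + Yi) * Q)
        - (lc ^ 3 • ((4:ℂ) • Zi) + lc ^ 2 • (Q * ((4:ℂ) • Zi) * Q)) := by rw [hconst]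
    _ = _ := by noncomm_ring; module

end Aux

theorem lambda_resolvent_ineq {n : ℕ} {A B : Matrix (Fin n) (Fin n) ℂ}
    (hA : A.PosSemidef) (hB : B.PosSemidef) (lam : ℝ) (hlam : 0 < lam)
    (hM : ((2 : ℂ)⁻¹ • (A + B)).PosSemidef) :
    ((lam : ℂ) • (A * A) * (A + (lam : ℂ) • 1)⁻¹
      + (lam : ℂ) • (B * B) * (B + (lam : ℂ) • 1)⁻¹
      - hM.sqrt * ((lam : ℂ) • A * (A + (lam : ℂ) • 1)⁻¹
          + (lam : ℂ) • B * (B + (lam : ℂ) • 1)⁻¹) * hM.sqrt).PosSemidef := by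
  have hlc0 : (0:ℂ) < (lam : ℂ) := by exact_mod_cast hlam
  have hlamI : (((lam : ℂ)) • (1 : Matrix (Fin n) (Fin n) ℂ)).PosDef := by
    have : ((lam : ℂ)) • (1 : Matrix (Fin n) (Fin n) ℂ)
        = Matrix.diagonal (fun _ => (lam : ℂ)) := by
      ext i j
      by_cases h : i = j <;> simp [Matrix.one_apply, h]
    rw [this]
    exact Matrix.PosDef.diagonal (fun _ => hlc0)
  have hX : (A + (lam : ℂ) • 1).PosDef := Matrix.PosDef.posSemidef_add hA hlamI
  have hY : (B + (lam : ℂ) • 1).PosDef := Matrix.PosDef.posSemidef_add hB hlamI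
  have hXY : ((A + (lam : ℂ) • 1) + (B + (lam : ℂ) • 1)).PosDef := hX.add hY
  have hS : ((A + (lam : ℂ) • 1)⁻¹ + (B + (lam : ℂ) • 1)⁻¹).PosDef := hX.inv.add hY.inv
  have hXd : IsUnit (A + (lam : ℂ) • 1).det :=
    (Matrix.isUnit_iff_isUnit_det _).mp hX.isUnit
  have hYd : IsUnit (B + (lam : ℂ) • 1).det :=
    (Matrix.isUnit_iff_isUnit_det _).mp hY.isUnit
  have hXYd : IsUnit ((A + (lam : ℂ) • 1) + (B + (lam : ℂ) • 1)).det :=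
    (Matrix.isUnit_iff_isUnit_det _).mp hXY.isUnit
  have hSd : IsUnit ((A + (lam : ℂ) • 1)⁻¹ + (B + (lam : ℂ) • 1)⁻¹).det :=
    (Matrix.isUnit_iff_isUnit_det _).mp hS.isUnit
  have hXXi := Matrix.mul_nonsing_inv _ hXd
  have hXiX := Matrix.nonsing_inv_mul _ hXd
  have hYYi := Matrix.mul_nonsing_inv _ hYd
  have hYiY := Matrix.nonsing_inv_mul _ hYd
  have hZi := Matrix.mul_nonsing_inv _ hXYd
  have hZi' := Matrix.nonsing_inv_mul _ hXYd
  have hSi := Matrix.mul_nonsing_inv _ hSd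
  -- sqrt facts
  have hQQ : hM.sqrt * hM.sqrt = (2 : ℂ)⁻¹ • (A + B) := psd_sqrt_mul_self' hM
  have hQH : hM.sqrtᴴ = hM.sqrt := psd_sqrt_herm' hM
  generalize hq : hM.sqrt = Q at hQQ hQH ⊢
  have hMM : (2:ℂ) • ((2 : ℂ)⁻¹ • (A + B)) = A + B := by
    rw [smul_smul]; norm_num
  have hQM : Q * ((2 : ℂ)⁻¹ • (A + B)) = ((2 : ℂ)⁻¹ • (A + B)) * Q := by
    rw [← hQQ, Matrix.mul_assoc]
  have hQAB : Q * (A + B) = (A + B) * Q := by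
    rw [← hMM, Matrix.mul_smul, Matrix.smul_mul, hQM]
  have hQXY : Q * ((A + (lam : ℂ) • 1) + (B + (lam : ℂ) • 1))
      = ((A + (lam : ℂ) • 1) + (B + (lam : ℂ) • 1)) * Q := by
    have e : (A + (lam : ℂ) • 1) + (B + (lam : ℂ) • 1)
        = (A + B) + (2 * (lam : ℂ)) • (1 : Matrix (Fin n) (Fin n) ℂ) := by module
    rw [e, Matrix.mul_add, Matrix.add_mul, hQAB, Matrix.mul_smul, Matrix.smul_mul,
      mul_one, one_mul]
  have hQZi : Q * ((A + (lam : ℂ) • 1) + (B + (lam : ℂ) • 1))⁻¹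
      = ((A + (lam : ℂ) • 1) + (B + (lam : ℂ) • 1))⁻¹ * Q :=
    commute_inv' hXYd hQXY
  -- rewrite the goal via the main algebraic identity
  rw [alg_main A B (A + (lam : ℂ) • 1) (B + (lam : ℂ) • 1)
    (A + (lam : ℂ) • 1)⁻¹ (B + (lam : ℂ) • 1)⁻¹
    ((A + (lam : ℂ) • 1) + (B + (lam : ℂ) • 1))⁻¹ Q ((2 : ℂ)⁻¹ • (A + B))
    (lam : ℂ) rfl rfl hXXi hYYi hZi' hQZi hQQ hMM]
  -- AM-HM : the inner matrix is PSD
  have hZ1 : (B + (lam : ℂ) • 1)⁻¹ * ((A + (lam : ℂ) • 1)⁻¹ + (B + (lam : ℂ) • 1)⁻¹)⁻¹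
      * (A + (lam : ℂ) • 1)⁻¹ = ((A + (lam : ℂ) • 1) + (B + (lam : ℂ) • 1))⁻¹ :=
    (Matrix.inv_eq_right_inv (right_inv_lemma₁ _ _ _ _ _ hXXi hYYi hYiY hSi)).symm
  have hZ2 : (A + (lam : ℂ) • 1)⁻¹ * ((A + (lam : ℂ) • 1)⁻¹ + (B + (lam : ℂ) • 1)⁻¹)⁻¹
      * (B + (lam : ℂ) • 1)⁻¹ = ((A + (lam : ℂ) • 1) + (B + (lam : ℂ) • 1))⁻¹ :=
    (Matrix.inv_eq_right_inv (right_inv_lemma₂ _ _ _ _ _ hXXi hXiX hYYi hSi)).symm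
  have hSmid : ((A + (lam : ℂ) • 1)⁻¹ + (B + (lam : ℂ) • 1)⁻¹)
      * ((A + (lam : ℂ) • 1)⁻¹ + (B + (lam : ℂ) • 1)⁻¹)⁻¹
      * ((A + (lam : ℂ) • 1)⁻¹ + (B + (lam : ℂ) • 1)⁻¹)
      = (A + (lam : ℂ) • 1)⁻¹ + (B + (lam : ℂ) • 1)⁻¹ := by
    rw [hSi, one_mul]
  have hE := amhm_alg (A + (lam : ℂ) • 1)⁻¹ (B + (lam : ℂ) • 1)⁻¹
    ((A + (lam : ℂ) • 1)⁻¹ + (B + (lam : ℂ) • 1)⁻¹)⁻¹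
    ((A + (lam : ℂ) • 1) + (B + (lam : ℂ) • 1))⁻¹ hSmid hZ1 hZ2
  have hEpsd : ((A + (lam : ℂ) • 1)⁻¹ + (B + (lam : ℂ) • 1)⁻¹
      - (4:ℂ) • ((A + (lam : ℂ) • 1) + (B + (lam : ℂ) • 1))⁻¹).PosSemidef := by
    rw [hE]
    have hDH : ((A + (lam : ℂ) • 1)⁻¹ - (B + (lam : ℂ) • 1)⁻¹)ᴴ
        = (A + (lam : ℂ) • 1)⁻¹ - (B + (lam : ℂ) • 1)⁻¹ := by
      rw [Matrix.conjTranspose_sub, hX.inv.isHermitian.eq, hY.inv.isHermitian.eq]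
    have := hS.inv.posSemidef.conjTranspose_mul_mul_same
      ((A + (lam : ℂ) • 1)⁻¹ - (B + (lam : ℂ) • 1)⁻¹)
    rwa [hDH] at this
  -- final positivity
  have h1 : ((lam : ℂ) ^ 3 • ((A + (lam : ℂ) • 1)⁻¹ + (B + (lam : ℂ) • 1)⁻¹
      - (4:ℂ) • ((A + (lam : ℂ) • 1) + (B + (lam : ℂ) • 1))⁻¹)).PosSemidef := by
    have e : ((lam : ℂ)) ^ 3 = ((lam ^ 3 : ℝ) : ℂ) := by push_cast; ring
    rw [e]
    exact smul_posSemidef' hEpsd (by positivity)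
  have h2 : ((lam : ℂ) ^ 2 • (Q * ((A + (lam : ℂ) • 1)⁻¹ + (B + (lam : ℂ) • 1)⁻¹
      - (4:ℂ) • ((A + (lam : ℂ) • 1) + (B + (lam : ℂ) • 1))⁻¹) * Q)).PosSemidef := by
    have hQEQ := hEpsd.conjTranspose_mul_mul_same Q
    rw [hQH] at hQEQ
    have e : ((lam : ℂ)) ^ 2 = ((lam ^ 2 : ℝ) : ℂ) := by push_cast; ring
    rw [e]
    exact smul_posSemidef' hQEQ (by positivity)
  exact h1.add h2
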